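/- Conversely, given an injective function P : G → C with P(g₁) ∈ D(P(g₂)) for every (g₁,g₂) ∈ E, the Boolean assignment p g c := (P g = c) satisfies all four SAT constraints: at-most-one cell per gate, at-least-one cell per gate, at-most-one gate per cell, and the connectivity-domain clauses. -/
import Mathlib

theorem placement_satisfies_sat_constraints {G C : Type*} [Fintype G] [Fintype C]
    [DecidableEq C]
    (E : Set (G × G)) (D : C → Finset C) (P : G → C)
    (hinj : Function.Injective P)
    (hE : ∀ g₁ g₂ : G, (g₁, g₂) ∈ E → P g₁ ∈ D (P g₂)) :
    -- at most one cell per gate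
    (∀ (g : G) (c₁ c₂ : C), c₁ ≠ c₂ →
        ¬(decide (P g = c₁) = true ∧ decide (P g = c₂) = true)) ∧
    -- at least one cell per gate
    (∀ g : G, ∃ c : C, decide (P g = c) = true) ∧
    -- at most one gate per cell
    (∀ (c : C) (g₁ g₂ : G), g₁ ≠ g₂ →
        ¬(decide (P g₁ = c) = true ∧ decide (P g₂ = c) = true)) ∧
    -- connectivity-domain clauses
    (∀ g₁ g₂ : G, (g₁, g₂) ∈ E → ∀ c₂ : C, decide (P g₂ = c₂) = true →
        ∃ c₁ ∈ D c₂, decide (P g₁ = c₁) = true) := by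
  refine ⟨?_, ?_, ?_, ?_⟩
  · intro g c₁ c₂ hne ⟨h1, h2⟩
    exact hne ((of_decide_eq_true h1).symm.trans (of_decide_eq_true h2))
  · intro g; exact ⟨P g, decide_eq_true rfl⟩
  · intro c g₁ g₂ hne ⟨h1, h2⟩
    exact hne (hinj ((of_decide_eq_true h1).trans (of_decide_eq_true h2).symm))
  · intro g₁ g₂ hEm c₂ h2
    exact ⟨P g₁, (of_decide_eq_true h2) ▸ hE g₁ g₂ hEm, decide_eq_true rfl⟩
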